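/- Let R_0 ∈ ℝ^m, let Δ_0, …, Δ_t ∈ ℝ^n, and set R_{t+1} := R_0 + B ∑_{τ=0}^{t} Δ_τ. Then for every state i, −max_{j ∈ U_i} R_{t+1}^j ≤ (1 + γ) ‖V*_{R_0} − ∑_{τ=0}^{t} Δ_τ‖_∞. In particular, if ‖V*_{R_0} − ∑_{τ=0}^{t} Δ_τ‖_∞ ≤ α^{t+1} ‖V*_{R_0}‖_∞ for some α ∈ [0,1), then the stage costs c_{t+1} := −∑_{i=1}^{n} max_{j ∈ U_i} R_{t+1}^j are geometrically bounded and ∑_{t} c_t < ∞. -/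

import Mathlib

open Matrix MeasureTheory Filter Topology

noncomputable section

/-- The policy matrix `Π` of a deterministic policy `π`. -/
def polMat {n m : ℕ} (π : Fin n → Fin m) : Matrix (Fin n) (Fin m) ℝ :=
  Matrix.of fun i j => if j = π i then 1 else 0

/-- The matrix `S` with `S^j_i = 1` iff `s j = i`. -/
def projMat {n m : ℕ} (s : Fin m → Fin n) : Matrix (Fin m) (Fin n) ℝ :=
  Matrix.of fun j i => if s j = i then 1 else 0

/-- A row-stochastic matrix: nonnegative entries, rows summing to one. -/
def RowStochastic {n m : ℕ} (F : Matrix (Fin m) (Fin n) ℝ) : Prop :=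
  (∀ j i, 0 ≤ F j i) ∧ ∀ j, ∑ i, F j i = 1

/-- A deterministic policy: a section of the state projection `s`. -/
def IsPolicy {n m : ℕ} (s : Fin m → Fin n) (π : Fin n → Fin m) : Prop :=
  ∀ i, s (π i) = i

/-- The value vector `V_{π,R} = (I − γΠF)⁻¹ Π R`. -/
def valueVec {n m : ℕ} (γ : ℝ) (F : Matrix (Fin m) (Fin n) ℝ)
    (π : Fin n → Fin m) (R : Fin m → ℝ) : Fin n → ℝ :=
  ((1 : Matrix (Fin n) (Fin n) ℝ) - γ • (polMat π * F))⁻¹ *ᵥ (polMat π *ᵥ R)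

/-- A policy is optimal for `R` when its value vector dominates all others componentwise. -/
def IsOptimal {n m : ℕ} (s : Fin m → Fin n) (γ : ℝ) (F : Matrix (Fin m) (Fin n) ℝ)
    (R : Fin m → ℝ) (π : Fin n → Fin m) : Prop :=
  IsPolicy s π ∧ ∀ π', IsPolicy s π' → ∀ i, valueVec γ F π' R i ≤ valueVec γ F π R i

/-- `hmax R i = max_{j ∈ U_i} R j`. -/
def hmax {n m : ℕ} (s : Fin m → Fin n) (R : Fin m → ℝ) (i : Fin n) : ℝ :=
  sSup {x | ∃ j, s j = i ∧ R j = x}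

/- ---------------- auxiliary lemmas ---------------- -/

lemma hmax_set_finite {n m : ℕ} (s : Fin m → Fin n) (R : Fin m → ℝ) (i : Fin n) :
    {x | ∃ j, s j = i ∧ R j = x}.Finite :=
  (Set.finite_range R).subset (by rintro x ⟨j, -, rfl⟩; exact ⟨j, rfl⟩)

lemma hmax_set_nonempty {n m : ℕ} {s : Fin m → Fin n} (hs : Function.Surjective s)
    (R : Fin m → ℝ) (i : Fin n) : {x | ∃ j, s j = i ∧ R j = x}.Nonempty := by
  obtain ⟨j, hj⟩ := hs i; exact ⟨R j, j, hj, rfl⟩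

lemma le_hmax {n m : ℕ} (s : Fin m → Fin n) (R : Fin m → ℝ) {i : Fin n} {j : Fin m}
    (hj : s j = i) : R j ≤ hmax s R i :=
  le_csSup (hmax_set_finite s R i).bddAbove ⟨j, hj, rfl⟩

lemma hmax_le {n m : ℕ} {s : Fin m → Fin n} (hs : Function.Surjective s)
    {R : Fin m → ℝ} {i : Fin n} {c : ℝ} (h : ∀ j, s j = i → R j ≤ c) : hmax s R i ≤ c :=
  csSup_le (hmax_set_nonempty hs R i) (by rintro x ⟨j, hj, rfl⟩; exact h j hj)

lemma exists_hmax {n m : ℕ} {s : Fin m → Fin n} (hs : Function.Surjective s)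
    (R : Fin m → ℝ) (i : Fin n) : ∃ j, s j = i ∧ hmax s R i = R j := by
  obtain ⟨j, hj, hR⟩ := (hmax_set_nonempty hs R i).csSup_mem (hmax_set_finite s R i)
  exact ⟨j, hj, hR.symm⟩

lemma mulVec_abs_le {n m : ℕ} {F : Matrix (Fin m) (Fin n) ℝ} (hF : RowStochastic F)
    (x : Fin n → ℝ) (j : Fin m) : |(F *ᵥ x) j| ≤ ‖x‖ := by
  have h1 : |(F *ᵥ x) j| ≤ ∑ k, F j k * |x k| := by
    rw [Matrix.mulVec, dotProduct]
    refine (Finset.abs_sum_le_sum_abs _ _).trans ?_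
    refine Finset.sum_le_sum fun k _ => ?_
    rw [abs_mul, abs_of_nonneg (hF.1 j k)]
  refine h1.trans ?_
  calc ∑ k, F j k * |x k| ≤ ∑ k, F j k * ‖x‖ := by
        refine Finset.sum_le_sum fun k _ => ?_
        exact mul_le_mul_of_nonneg_left (by simpa [Real.norm_eq_abs] using norm_le_pi_norm x k)
          (hF.1 j k)
    _ = ‖x‖ := by rw [← Finset.sum_mul, hF.2 j, one_mul]

lemma polMat_mul_apply {n m : ℕ} (π : Fin n → Fin m) (F : Matrix (Fin m) (Fin n) ℝ)
    (i k : Fin n) : (polMat π * F) i k = F (π i) k := by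
  simp [polMat, Matrix.mul_apply]

lemma polMat_mulVec {n m : ℕ} (π : Fin n → Fin m) (R : Fin m → ℝ) (i : Fin n) :
    (polMat π *ᵥ R) i = R (π i) := by
  simp [polMat, Matrix.mulVec, dotProduct]

lemma rowStochastic_polMat_mul {n m : ℕ} (π : Fin n → Fin m) {F : Matrix (Fin m) (Fin n) ℝ}
    (hF : RowStochastic F) : RowStochastic (polMat π * F) := by
  constructor
  · intro i k; rw [polMat_mul_apply]; exact hF.1 _ _
  · intro i; simp only [polMat_mul_apply]; exact hF.2 _

lemma det_one_sub_smul_ne_zero {n : ℕ} {γ : ℝ} (hγ0 : 0 ≤ γ) (hγ1 : γ < 1)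
    {A : Matrix (Fin n) (Fin n) ℝ} (hA : RowStochastic A) :
    ((1 : Matrix (Fin n) (Fin n) ℝ) - γ • A).det ≠ 0 := by
  apply det_ne_zero_of_sum_row_lt_diag
  intro k
  have hAkk : A k k ≤ 1 := by
    rw [← hA.2 k]
    exact Finset.single_le_sum (fun i _ => hA.1 k i) (Finset.mem_univ k)
  have h1 : ((1 : Matrix (Fin n) (Fin n) ℝ) - γ • A) k k = 1 - γ * A k k := by
    simp [Matrix.one_apply, Matrix.sub_apply]
  have h2 : ∀ j ∈ Finset.univ.erase k,
      ‖((1 : Matrix (Fin n) (Fin n) ℝ) - γ • A) k j‖ = γ * A k j := by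
    intro j hj
    have hjk : j ≠ k := Finset.ne_of_mem_erase hj
    simp [Matrix.one_apply, Matrix.sub_apply, hjk.symm, Real.norm_eq_abs,
      abs_of_nonneg hγ0, abs_of_nonneg (hA.1 k j)]
  rw [Finset.sum_congr rfl h2, ← Finset.mul_sum,
    Finset.sum_erase_eq_sub (Finset.mem_univ k), hA.2 k, h1, Real.norm_eq_abs]
  have hpos : 0 < 1 - γ * A k k := by nlinarith [hA.1 k k]
  rw [abs_of_pos hpos]
  nlinarith [hA.1 k k]

lemma valueVec_fixed {n m : ℕ}
    {γ : ℝ} (hγ0 : 0 ≤ γ) (hγ1 : γ < 1) {F : Matrix (Fin m) (Fin n) ℝ}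
    (hF : RowStochastic F) (π : Fin n → Fin m) (R : Fin m → ℝ) (i : Fin n) :
    valueVec γ F π R i = R (π i) + γ * (F *ᵥ valueVec γ F π R) (π i) := by
  set A := polMat π * F with hA
  set M := (1 : Matrix (Fin n) (Fin n) ℝ) - γ • A with hM
  have hdet : M.det ≠ 0 := det_one_sub_smul_ne_zero hγ0 hγ1 (rowStochastic_polMat_mul π hF)
  have hMinv : M * M⁻¹ = 1 := Matrix.mul_nonsing_inv M (isUnit_iff_ne_zero.mpr hdet)
  have key : M *ᵥ valueVec γ F π R = polMat π *ᵥ R := by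
    rw [valueVec, Matrix.mulVec_mulVec, hMinv, Matrix.one_mulVec]
  have hkey := congrFun key i
  have hMi : (M *ᵥ valueVec γ F π R) i
      = valueVec γ F π R i - γ * (A *ᵥ valueVec γ F π R) i := by
    rw [hM, Matrix.sub_mulVec, Matrix.smul_mulVec, Matrix.one_mulVec]
    simp [Pi.sub_apply]
  have hAi : (A *ᵥ valueVec γ F π R) i = (F *ᵥ valueVec γ F π R) (π i) := by
    simp only [Matrix.mulVec, dotProduct, hA]
    exact Finset.sum_congr rfl fun k _ => by rw [polMat_mul_apply]
  rw [hMi, hAi, polMat_mulVec] at hkey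
  linarith

lemma comp_nonneg {n : ℕ} (hn : 1 ≤ n) {γ : ℝ} (hγ0 : 0 ≤ γ) (hγ1 : γ < 1)
    {A : Matrix (Fin n) (Fin n) ℝ} (hA : RowStochastic A) {u e : Fin n → ℝ}
    (h : ∀ i, u i = e i + γ * (A *ᵥ u) i) (he : ∀ i, 0 ≤ e i) : ∀ i, e i ≤ u i := by
  have hne : (Finset.univ : Finset (Fin n)).Nonempty := ⟨⟨0, hn⟩, Finset.mem_univ _⟩
  obtain ⟨i0, -, hi0⟩ := Finset.exists_min_image Finset.univ u hne
  have key : ∀ i, u i0 ≤ (A *ᵥ u) i := by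
    intro i
    calc u i0 = ∑ k, A i k * u i0 := by rw [← Finset.sum_mul, hA.2 i, one_mul]
      _ ≤ ∑ k, A i k * u k :=
        Finset.sum_le_sum fun k _ =>
          mul_le_mul_of_nonneg_left (hi0 k (Finset.mem_univ k)) (hA.1 i k)
      _ = (A *ᵥ u) i := by simp [Matrix.mulVec, dotProduct]
  have h0 : 0 ≤ u i0 := by nlinarith [h i0, he i0, key i0]
  intro i
  have hAu : 0 ≤ (A *ᵥ u) i := le_trans h0 (key i)
  nlinarith [h i]

lemma bellman_opt {n m : ℕ} (hn : 1 ≤ n) {s : Fin m → Fin n} (hs : Function.Surjective s)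
    {γ : ℝ} (hγ0 : 0 ≤ γ) (hγ1 : γ < 1) {F : Matrix (Fin m) (Fin n) ℝ}
    (hF : RowStochastic F) (R0 : Fin m → ℝ) {πs : Fin n → Fin m}
    (hπs : IsOptimal s γ F R0 πs) (i : Fin n) :
    hmax s (fun j => R0 j + γ * (F *ᵥ valueVec γ F πs R0) j) i = valueVec γ F πs R0 i := by
  set V := valueVec γ F πs R0 with hV
  set G : Fin m → ℝ := fun j => R0 j + γ * (F *ᵥ V) j with hG
  have hge : ∀ i, V i ≤ hmax s G i := by
    intro i
    have h1 : G (πs i) ≤ hmax s G i := le_hmax s G (hπs.1 i)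
    have h2 : V i = G (πs i) := valueVec_fixed hγ0 hγ1 hF πs R0 i
    linarith
  refine le_antisymm ?_ (hge i)
  have hex := fun i => exists_hmax hs G i
  choose π' hπ'1 hπ'2 using hex
  have hpol : IsPolicy s π' := hπ'1
  set y := valueVec γ F π' R0 with hy
  set u : Fin n → ℝ := fun i => y i - V i with hu
  set e : Fin n → ℝ := fun i => hmax s G i - V i with he
  have heq : ∀ i, u i = e i + γ * ((polMat π' * F) *ᵥ u) i := by
    intro i
    have hy' : y i = R0 (π' i) + γ * (F *ᵥ y) (π' i) := valueVec_fixed hγ0 hγ1 hF π' R0 i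
    have hmx : hmax s G i = R0 (π' i) + γ * (F *ᵥ V) (π' i) := hπ'2 i
    have hmv : ((polMat π' * F) *ᵥ u) i = (F *ᵥ y) (π' i) - (F *ᵥ V) (π' i) := by
      have : u = y - V := rfl
      rw [this, Matrix.mulVec_sub]
      simp only [Pi.sub_apply]
      congr 1 <;>
        · simp only [Matrix.mulVec, dotProduct]
          exact Finset.sum_congr rfl fun k _ => by rw [polMat_mul_apply]
    rw [hmv, hu, he]
    simp only [hy', hmx]
    ring
  have hepos : ∀ i, 0 ≤ e i := fun i => by simp [he, hge i]
  have hle : ∀ i, e i ≤ u i :=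
    comp_nonneg hn hγ0 hγ1 (rowStochastic_polMat_mul π' hF) heq hepos
  have hopt : u i ≤ 0 := by
    have := hπs.2 π' hpol i
    simp only [hu]; linarith
  have := hle i
  simp only [he] at this ⊢
  linarith

lemma B_mulVec_apply {n m : ℕ} (s : Fin m → Fin n) (γ : ℝ) (F : Matrix (Fin m) (Fin n) ℝ)
    (W : Fin n → ℝ) (j : Fin m) :
    ((γ • F - projMat s) *ᵥ W) j = γ * (F *ᵥ W) j - W (s j) := by
  rw [Matrix.sub_mulVec]
  have h1 : (projMat s *ᵥ W) j = W (s j) := by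
    simp [projMat, Matrix.mulVec, dotProduct]
  have h2 : ((γ • F) *ᵥ W) j = γ * (F *ᵥ W) j := by
    rw [Matrix.smul_mulVec]; simp
  simp [h1, h2]

/-- Two-sided bound on `hmax` of the residual reward. -/
lemma hmax_abs_bound {n m : ℕ} (hn : 1 ≤ n) {s : Fin m → Fin n} (hs : Function.Surjective s)
    {γ : ℝ} (hγ0 : 0 ≤ γ) (hγ1 : γ < 1) {F : Matrix (Fin m) (Fin n) ℝ}
    (hF : RowStochastic F) (R0 : Fin m → ℝ) {πs : Fin n → Fin m}
    (hπs : IsOptimal s γ F R0 πs) (W : Fin n → ℝ) (i : Fin n) :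
    |hmax s (R0 + (γ • F - projMat s) *ᵥ W) i| ≤ (1 + γ) * ‖valueVec γ F πs R0 - W‖ := by
  set V := valueVec γ F πs R0 with hV
  set N := ‖V - W‖ with hN
  have hcomp : ∀ k : Fin n, |(V - W) k| ≤ N := fun k => by
    simpa [Real.norm_eq_abs] using norm_le_pi_norm (V - W) k
  have hFb : ∀ j, |(F *ᵥ (V - W)) j| ≤ N := fun j => mulVec_abs_le hF (V - W) j
  have hlin : ∀ j : Fin m, (F *ᵥ V) j - (F *ᵥ W) j = (F *ᵥ (V - W)) j := fun j => by
    rw [Matrix.mulVec_sub]; simp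
  rw [abs_le]
  constructor
  · -- lower bound : hmax ≥ -(1+γ)N, via the action πs i
    have hj : s (πs i) = i := hπs.1 i
    have h1 := le_hmax s (R0 + (γ • F - projMat s) *ᵥ W) hj
    have h2 : (R0 + (γ • F - projMat s) *ᵥ W) (πs i)
        = (V - W) i - γ * (F *ᵥ (V - W)) (πs i) := by
      have hfix : V i = R0 (πs i) + γ * (F *ᵥ V) (πs i) := valueVec_fixed hγ0 hγ1 hF πs R0 i
      simp only [Pi.add_apply, B_mulVec_apply, hj]
      rw [← hlin]
      simp only [Pi.sub_apply]
      linarith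
    rw [h2] at h1
    have := hcomp i
    have := hFb (πs i)
    have h3 : -((1 + γ) * N) ≤ (V - W) i - γ * (F *ᵥ (V - W)) (πs i) := by
      have hx : -N ≤ (V - W) i := (abs_le.mp (hcomp i)).1
      have hy : γ * (F *ᵥ (V - W)) (πs i) ≤ γ * N :=
        mul_le_mul_of_nonneg_left (abs_le.mp (hFb (πs i))).2 hγ0
      nlinarith
    linarith
  · -- upper bound, via Bellman optimality
    refine hmax_le hs fun j hj => ?_
    have hbel := bellman_opt hn hs hγ0 hγ1 hF R0 hπs i
    rw [← hV] at hbel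
    have hjle : R0 j + γ * (F *ᵥ V) j ≤ V i := by
      rw [← hbel]
      exact le_hmax s (fun j => R0 j + γ * (F *ᵥ V) j) hj
    have h2 : (R0 + (γ • F - projMat s) *ᵥ W) j
        = R0 j + γ * (F *ᵥ V) j - γ * (F *ᵥ (V - W)) j - W i := by
      simp only [Pi.add_apply, B_mulVec_apply, hj]
      rw [← hlin]; ring
    rw [h2]
    have hx : (V - W) i ≤ N := (abs_le.mp (hcomp i)).2
    have hy : -(γ * N) ≤ γ * (F *ᵥ (V - W)) j := by
      have := (abs_le.mp (hFb j)).1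
      nlinarith
    have : V i - W i ≤ N := by simpa [Pi.sub_apply] using hx
    nlinarith

/-- Stage-cost bound: for `R_{t+1} = R₀ + B ∑_{τ≤t} Δ_τ`, each
`−max_{j ∈ U_i} R_{t+1}^j` is bounded by `(1+γ)‖V*_{R₀} − ∑_{τ≤t} Δ_τ‖_∞`; consequently, if
the input partial sums approach `V*_{R₀}` geometrically, the stage costs are summable. -/
theorem stage_cost_geometric_bound {n m : ℕ} (hn : 1 ≤ n) (hm : 1 ≤ m)
    (s : Fin m → Fin n) (hs : Function.Surjective s)
    (γ : ℝ) (hγ0 : 0 ≤ γ) (hγ1 : γ < 1)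
    (F : Matrix (Fin m) (Fin n) ℝ) (hF : RowStochastic F)
    (R0 : Fin m → ℝ) (πs : Fin n → Fin m) (hπs : IsOptimal s γ F R0 πs) :
    (∀ (t : ℕ) (Δ : ℕ → Fin n → ℝ) (i : Fin n),
        -hmax s (R0 + (γ • F - projMat s) *ᵥ ∑ τ ∈ Finset.range (t + 1), Δ τ) i ≤
          (1 + γ) * ‖valueVec γ F πs R0 - ∑ τ ∈ Finset.range (t + 1), Δ τ‖) ∧
      ∀ (Δ : ℕ → Fin n → ℝ) (α : ℝ), 0 ≤ α → α < 1 →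
        (∀ t : ℕ, ‖valueVec γ F πs R0 - ∑ τ ∈ Finset.range (t + 1), Δ τ‖ ≤
            α ^ (t + 1) * ‖valueVec γ F πs R0‖) →
        Summable (fun t : ℕ =>
          -∑ i, hmax s (R0 + (γ • F - projMat s) *ᵥ ∑ τ ∈ Finset.range (t + 1), Δ τ) i) := by
  constructor
  · intro t Δ i
    have := hmax_abs_bound hn hs hγ0 hγ1 hF R0 hπs (∑ τ ∈ Finset.range (t + 1), Δ τ) i
    have h := (abs_le.mp this).1
    linarith
  · intro Δ α hα0 hα1 hgeo
    set V := valueVec γ F πs R0 with hV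
    set C : ℝ := (n : ℝ) * (1 + γ) * ‖V‖ with hC
    have hbound : ∀ t : ℕ,
        ‖-∑ i, hmax s (R0 + (γ • F - projMat s) *ᵥ ∑ τ ∈ Finset.range (t + 1), Δ τ) i‖
          ≤ (C * α) * α ^ t := by
      intro t
      set W := ∑ τ ∈ Finset.range (t + 1), Δ τ with hW
      rw [Real.norm_eq_abs, abs_neg]
      calc |∑ i, hmax s (R0 + (γ • F - projMat s) *ᵥ W) i|
          ≤ ∑ i, |hmax s (R0 + (γ • F - projMat s) *ᵥ W) i| :=
            Finset.abs_sum_le_sum_abs _ _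
        _ ≤ ∑ _i : Fin n, (1 + γ) * ‖V - W‖ :=
            Finset.sum_le_sum fun i _ => hmax_abs_bound hn hs hγ0 hγ1 hF R0 hπs W i
        _ = (n : ℝ) * ((1 + γ) * ‖V - W‖) := by
            rw [Finset.sum_const, Finset.card_univ, Fintype.card_fin, nsmul_eq_mul]
        _ ≤ (n : ℝ) * ((1 + γ) * (α ^ (t + 1) * ‖V‖)) := by
            have h1 : 0 ≤ (1 + γ) := by linarith
            have := hgeo t
            have h2 : (1 + γ) * ‖V - W‖ ≤ (1 + γ) * (α ^ (t + 1) * ‖V‖) :=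
              mul_le_mul_of_nonneg_left this h1
            exact mul_le_mul_of_nonneg_left h2 (Nat.cast_nonneg n)
        _ = (C * α) * α ^ t := by rw [hC]; ring
    have hsum : Summable (fun t : ℕ => (C * α) * α ^ t) :=
      (summable_geometric_of_lt_one hα0 hα1).mul_left _
    exact Summable.of_norm_bounded hsum hbound
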